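/- arXiv:2412.20797 — 4 statements merged into one kernel-verified Lean document; each statement's English description precedes it below -/
import Mathlib

section
/- Let A be a commutative ring and f(u) = Σ_{i=0}^n a_{2n-2i} u^{2i} a monic polynomial in u² over A (a₀ = 1). Define the signed splitting ring B = A[η₁,…,η_n]/I where I is generated by the relations a_{2i} = (-1)^i e_i(η₁²,…,η_n²) for i = 1,…,n. Then B is free of rank 2^n · n! as an A-module. -/
open MvPolynomial

/-- The `i`-th elementary symmetric polynomial evaluated at the squares of the variables. -/
noncomputable def esymmSq (A : Type*) [CommRing A] (n i : ℕ) : MvPolynomial (Fin n) A :=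
  ∑ s ∈ Finset.powersetCard i (Finset.univ : Finset (Fin n)), ∏ j ∈ s, X j ^ 2

/-- The ideal defining the signed splitting ring of the polynomial
`f(u) = Σ_{i=0}^n a_{2n-2i} u^{2i}` (with `a 0 = 1`): it is generated by the relations
`a_{2i} = (-1)^i e_i(η₁², …, η_n²)` for `i = 1, …, n`. -/
noncomputable def ssplitIdeal (A : Type*) [CommRing A] (n : ℕ) (a : ℕ → A) :
    Ideal (MvPolynomial (Fin n) A) :=
  Ideal.span (Set.range fun i : Fin n =>
    C (a (2 * (i.1 + 1))) - (-1 : MvPolynomial (Fin n) A) ^ (i.1 + 1) * esymmSq A n (i.1 + 1))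

/-- The signed splitting ring `SSplit_A(f) = A[η₁,…,η_n]/I`. -/
abbrev SSplit (A : Type*) [CommRing A] (n : ℕ) (a : ℕ → A) : Type _ :=
  MvPolynomial (Fin n) A ⧸ ssplitIdeal A n a

/-! ### Auxiliary material -/

/-- Elementary symmetric function of a tuple of ring elements. -/
noncomputable def Esym {S : Type*} [CommRing S] {m : ℕ} (y : Fin m → S) (k : ℕ) : S :=
  ∑ s ∈ Finset.powersetCard k (Finset.univ : Finset (Fin m)), ∏ j ∈ s, y j

lemma Esym_zero {S : Type*} [CommRing S] {m : ℕ} (y : Fin m → S) : Esym y 0 = 1 := by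
  simp [Esym]

lemma Esym_of_gt {S : Type*} [CommRing S] {m : ℕ} (y : Fin m → S) {k : ℕ} (h : m < k) :
    Esym y k = 0 := by
  rw [Esym, Finset.powersetCard_eq_empty.2 (by simpa using h), Finset.sum_empty]

lemma Esym_map {S : Type*} [CommRing S] {m : ℕ} (y : Fin (m+1) → S) (k : ℕ) :
    ∑ s ∈ Finset.powersetCard k ((Finset.univ : Finset (Fin m)).map Fin.castSuccEmb),
      ∏ j ∈ s, y j = Esym (y ∘ Fin.castSucc) k := by
  rw [Finset.powersetCard_map, Finset.sum_map, Esym]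
  refine Finset.sum_congr rfl fun s _ => ?_
  rw [show (Finset.mapEmbedding Fin.castSuccEmb).toEmbedding s = s.map Fin.castSuccEmb from rfl,
    Finset.prod_map]
  rfl

lemma Esym_succ {S : Type*} [CommRing S] {m : ℕ} (y : Fin (m + 1) → S) (k : ℕ) :
    Esym y (k + 1) = Esym (y ∘ Fin.castSucc) (k + 1)
      + y (Fin.last m) * Esym (y ∘ Fin.castSucc) k := by
  classical
  have hnot : Fin.last m ∉ (Finset.univ : Finset (Fin m)).map Fin.castSuccEmb := by
    simp only [Finset.mem_map, not_exists]
    intro j h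
    exact Nat.ne_of_lt j.isLt (by simpa using congrArg Fin.val h.2)
  rw [Esym, Fin.univ_castSuccEmb, Finset.cons_eq_insert,
    Finset.powersetCard_succ_insert hnot, Finset.sum_union]
  · rw [Esym_map]
    congr 1
    rw [Finset.sum_image]
    · rw [← Esym_map y k, Finset.mul_sum]
      refine Finset.sum_congr rfl fun s hs => ?_
      rw [Finset.prod_insert]
      intro hmem
      exact hnot ((Finset.mem_powersetCard.1 hs).1 hmem)
    · intro s hs t ht hst
      have hs' : Fin.last m ∉ s := fun h => hnot ((Finset.mem_powersetCard.1 hs).1 h)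
      have ht' : Fin.last m ∉ t := fun h => hnot ((Finset.mem_powersetCard.1 ht).1 h)
      rw [← Finset.erase_insert hs', ← Finset.erase_insert ht', hst]
  · rw [Finset.disjoint_left]
    intro u hu hu'
    rcases Finset.mem_image.1 hu' with ⟨t, ht, rfl⟩
    exact hnot ((Finset.mem_powersetCard.1 hu).1 (Finset.mem_insert_self _ _))

lemma ringHom_esymmSq {A S : Type*} [CommRing A] [CommRing S] {n : ℕ}
    (φ : MvPolynomial (Fin n) A →+* S) (k : ℕ) :
    φ (esymmSq A n k) = Esym (fun i => φ (X i) ^ 2) k := by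
  simp only [esymmSq, Esym, map_sum, map_prod, map_pow]

lemma aeval_esymmSq {A S : Type*} [CommRing A] [CommRing S] [Algebra A S] {n : ℕ}
    (g : Fin n → S) (k : ℕ) :
    MvPolynomial.aeval g (esymmSq A n k) = Esym (fun i => g i ^ 2) k := by
  simp only [esymmSq, Esym, map_sum, map_prod, map_pow, aeval_X]

lemma eval₂Hom_esymmSq {A S : Type*} [CommRing A] [CommRing S] {n : ℕ}
    (f : A →+* S) (g : Fin n → S) (k : ℕ) :
    MvPolynomial.eval₂Hom f g (esymmSq A n k) = Esym (fun i => g i ^ 2) k := by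
  simp only [esymmSq, Esym, map_sum, map_prod, map_pow, eval₂Hom_X']

/-- Telescoping sum lemma. -/
lemma ssplit_telescope {S : Type*} [CommRing S] (c : ℕ → S) (ε : ℕ → S) (t : S)
    (hc0 : c 0 = 1) (hε0 : ε 0 = 1) (K : ℕ)
    (hrel : ∀ k, k < K → c (2 * (k + 1)) = (-1) ^ (k + 1) * (ε (k + 1) + t * ε k)) :
    ∀ k, k ≤ K → ∑ j ∈ Finset.range (k + 1), c (2 * j) * t ^ (k - j) = (-1) ^ k * ε k := by
  intro k
  induction k with
  | zero => intro _; simp [hc0, hε0]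
  | succ k ih =>
    intro hk
    have h1 : ∑ j ∈ Finset.range (k + 1), c (2 * j) * t ^ (k + 1 - j)
        = t * ∑ j ∈ Finset.range (k + 1), c (2 * j) * t ^ (k - j) := by
      rw [Finset.mul_sum]
      refine Finset.sum_congr rfl fun j hj => ?_
      have hj' : j ≤ k := Nat.lt_succ_iff.1 (Finset.mem_range.1 hj)
      have h2 : k + 1 - j = (k - j) + 1 := by omega
      rw [h2, pow_succ]
      ring
    rw [Finset.sum_range_succ, h1, ih (by omega), hrel k (by omega), Nat.sub_self, pow_zero,
      pow_succ]
    ring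

lemma ssplit_rel {A : Type*} [CommRing A] {n : ℕ} (a : ℕ → A) (i : Fin n) :
    algebraMap A (SSplit A n a) (a (2 * (i.1 + 1)))
      = (-1) ^ (i.1 + 1)
        * Esym (fun j => Ideal.Quotient.mk (ssplitIdeal A n a) (X j) ^ 2) (i.1 + 1) := by
  have hmem : (C (a (2 * (i.1 + 1))) -
      (-1 : MvPolynomial (Fin n) A) ^ (i.1 + 1) * esymmSq A n (i.1 + 1)) ∈ ssplitIdeal A n a :=
    Ideal.subset_span ⟨i, rfl⟩
  have h0 := (Ideal.Quotient.eq_zero_iff_mem).2 hmem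
  rw [map_sub, sub_eq_zero] at h0
  calc algebraMap A (SSplit A n a) (a (2 * (i.1 + 1)))
      = Ideal.Quotient.mk _ (C (a (2 * (i.1 + 1)))) := rfl
    _ = Ideal.Quotient.mk (ssplitIdeal A n a)
          ((-1) ^ (i.1 + 1) * esymmSq A n (i.1 + 1)) := h0
    _ = _ := by rw [map_mul, map_pow, map_neg, map_one, ringHom_esymmSq]

lemma ssplit_rel' {A : Type*} [CommRing A] {n : ℕ} (a : ℕ → A) (ha : a 0 = 1)
    {k : ℕ} (hk : k ≤ n) :
    algebraMap A (SSplit A n a) (a (2 * k))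
      = (-1) ^ k * Esym (fun j => Ideal.Quotient.mk (ssplitIdeal A n a) (X j) ^ 2) k := by
  cases k with
  | zero => simp [ha, Esym_zero]
  | succ k => exact ssplit_rel a ⟨k, by omega⟩

/-! ### The polynomial `f` and the coefficients of the quotient -/

noncomputable def fpoly {A : Type*} [CommRing A] (n : ℕ) (a : ℕ → A) : Polynomial A :=
  Polynomial.X ^ (2 * (n + 1))
    + ∑ j ∈ Finset.range (n + 1), Polynomial.C (a (2 * (j + 1))) * Polynomial.X ^ (2 * (n - j))

lemma fpoly_tail_degree {A : Type*} [CommRing A] (n : ℕ) (a : ℕ → A) :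
    (∑ j ∈ Finset.range (n + 1),
      Polynomial.C (a (2 * (j + 1))) * Polynomial.X ^ (2 * (n - j))).degree
      < ((2 * (n + 1) : ℕ) : WithBot ℕ) := by
  refine lt_of_le_of_lt (Polynomial.degree_sum_le _ _) ?_
  rw [Finset.sup_lt_iff (by exact_mod_cast WithBot.bot_lt_coe _)]
  intro j hj
  refine lt_of_le_of_lt (Polynomial.degree_C_mul_X_pow_le _ _) ?_
  exact_mod_cast (by omega : 2 * (n - j) < 2 * (n + 1))

lemma fpoly_monic {A : Type*} [CommRing A] (n : ℕ) (a : ℕ → A) : (fpoly n a).Monic :=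
  Polynomial.monic_X_pow_add (fpoly_tail_degree n a)

lemma fpoly_natDegree {A : Type*} [CommRing A] [Nontrivial A] (n : ℕ) (a : ℕ → A) :
    (fpoly n a).natDegree = 2 * (n + 1) := by
  have hdeg : (fpoly n a).degree = (2 * (n + 1) : ℕ) := by
    rw [fpoly, Polynomial.degree_add_eq_left_of_degree_lt, Polynomial.degree_X_pow]
    rw [Polynomial.degree_X_pow]
    exact fpoly_tail_degree n a
  exact Polynomial.natDegree_eq_of_degree_eq_some hdeg

lemma aeval_fpoly {A S : Type*} [CommRing A] [CommRing S] [Algebra A S] (n : ℕ) (a : ℕ → A)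
    (ha : a 0 = 1) (t : S) :
    Polynomial.aeval t (fpoly n a)
      = ∑ j ∈ Finset.range (n + 2), algebraMap A S (a (2 * j)) * t ^ (2 * (n + 1 - j)) := by
  rw [Finset.sum_range_succ']
  simp only [fpoly, map_add, map_pow, map_sum, map_mul, Polynomial.aeval_X, Polynomial.aeval_C,
    Nat.succ_sub_succ, ha, map_one, one_mul, Nat.sub_zero]
  ring

noncomputable def bseq {A : Type*} [CommRing A] (n : ℕ) (a : ℕ → A) :
    ℕ → AdjoinRoot (fpoly n a) := fun k =>
  ∑ j ∈ Finset.range (k / 2 + 1),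
    algebraMap A (AdjoinRoot (fpoly n a)) (a (2 * j)) * AdjoinRoot.root (fpoly n a) ^ (k - 2 * j)

lemma bseq_zero {A : Type*} [CommRing A] (n : ℕ) (a : ℕ → A) (ha : a 0 = 1) :
    bseq n a 0 = 1 := by
  simp [bseq, ha]

lemma bseq_even {A : Type*} [CommRing A] (n : ℕ) (a : ℕ → A) (k : ℕ) :
    bseq n a (2 * k) = ∑ j ∈ Finset.range (k + 1),
      algebraMap A (AdjoinRoot (fpoly n a)) (a (2 * j))
        * AdjoinRoot.root (fpoly n a) ^ (2 * (k - j)) := by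
  rw [bseq, Nat.mul_div_cancel_left k (by norm_num)]
  refine Finset.sum_congr rfl fun j hj => ?_
  have hj' : j ≤ k := Nat.lt_succ_iff.1 (Finset.mem_range.1 hj)
  have h2 : 2 * k - 2 * j = 2 * (k - j) := by omega
  rw [h2]

lemma bseq_succ {A : Type*} [CommRing A] (n : ℕ) (a : ℕ → A) (k : ℕ) :
    bseq n a (2 * (k + 1)) = algebraMap A (AdjoinRoot (fpoly n a)) (a (2 * (k + 1)))
      + AdjoinRoot.root (fpoly n a) ^ 2 * bseq n a (2 * k) := by
  rw [bseq_even, bseq_even, Finset.sum_range_succ, Finset.mul_sum, Nat.sub_self, Nat.mul_zero,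
    pow_zero, mul_one, add_comm]
  congr 1
  refine Finset.sum_congr rfl fun j hj => ?_
  have hj' : j ≤ k := Nat.lt_succ_iff.1 (Finset.mem_range.1 hj)
  have h2 : 2 * (k + 1 - j) = 2 * (k - j) + 2 := by omega
  rw [h2, pow_add]
  ring

lemma bseq_top {A : Type*} [CommRing A] (n : ℕ) (a : ℕ → A) (ha : a 0 = 1) :
    bseq n a (2 * (n + 1)) = 0 := by
  have h := aeval_fpoly n a ha (AdjoinRoot.root (fpoly n a))
  rw [AdjoinRoot.aeval_eq, AdjoinRoot.mk_self] at h
  rw [bseq_even]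
  exact h.symm

/-! ### The step: relations in `B = SSplit A (n+1) a` -/

section Step

variable {A : Type*} [CommRing A] (n : ℕ) (a : ℕ → A)

/-- The images of the variables in the signed splitting ring. -/
noncomputable def xv (i : Fin (n + 1)) : SSplit A (n + 1) a :=
  Ideal.Quotient.mk (ssplitIdeal A (n + 1) a) (X i)

/-- Elementary symmetric functions of the squares of the first `n` variables in `B`. -/
noncomputable def epsB (k : ℕ) : SSplit A (n + 1) a :=
  Esym (fun j : Fin n => xv n a j.castSucc ^ 2) k

lemma relB (ha : a 0 = 1) {k : ℕ} (hk : k ≤ n) :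
    algebraMap A (SSplit A (n + 1) a) (a (2 * (k + 1)))
      = (-1) ^ (k + 1) * (epsB n a (k + 1) + xv n a (Fin.last n) ^ 2 * epsB n a k) := by
  rw [ssplit_rel' a ha (show k + 1 ≤ n + 1 by omega), Esym_succ]
  rfl

lemma hsumB (ha : a 0 = 1) : ∀ k, k ≤ n + 1 →
    ∑ j ∈ Finset.range (k + 1),
      algebraMap A (SSplit A (n + 1) a) (a (2 * j)) * (xv n a (Fin.last n) ^ 2) ^ (k - j)
      = (-1) ^ k * epsB n a k := by
  refine ssplit_telescope (fun m => algebraMap A (SSplit A (n + 1) a) (a m)) (epsB n a)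
    (xv n a (Fin.last n) ^ 2) (by show algebraMap A (SSplit A (n + 1) a) (a 0) = 1; rw [ha, map_one]) (Esym_zero _) (n + 1) ?_
  intro k hk
  exact relB n a ha (by omega)

lemma hrootB (ha : a 0 = 1) : Polynomial.aeval (xv n a (Fin.last n)) (fpoly n a) = 0 := by
  rw [aeval_fpoly n a ha]
  have h := hsumB n a ha (n + 1) le_rfl
  rw [epsB, Esym_of_gt _ (Nat.lt_succ_self n), mul_zero] at h
  rw [← h]
  refine Finset.sum_congr rfl fun j hj => ?_
  rw [← pow_mul]

/-- The map `A₁ = A[u]/(f) → B` sending the root to the last variable. -/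
noncomputable def hhom (ha : a 0 = 1) : AdjoinRoot (fpoly n a) →ₐ[A] SSplit A (n + 1) a :=
  AdjoinRoot.liftAlgHom _ (Algebra.ofId A _) _ (hrootB n a ha)

lemma hhom_root (ha : a 0 = 1) :
    hhom n a ha (AdjoinRoot.root (fpoly n a)) = xv n a (Fin.last n) := by
  exact AdjoinRoot.liftAlgHom_root _ _ _ _

lemma hhom_bseq (ha : a 0 = 1) {k : ℕ} (hk : k ≤ n + 1) :
    hhom n a ha (bseq n a (2 * k)) = (-1) ^ k * epsB n a k := by
  rw [bseq_even, map_sum, ← hsumB n a ha k hk]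
  refine Finset.sum_congr rfl fun j hj => ?_
  rw [map_mul, map_pow, AlgHom.commutes, hhom_root, pow_mul]

end Step

section Step2

variable {A : Type*} [CommRing A] (n : ℕ) (a : ℕ → A)

/-- The images of the variables in `C = SSplit A₁ n b`. -/
noncomputable def yv (i : Fin n) : SSplit (AdjoinRoot (fpoly n a)) n (bseq n a) :=
  Ideal.Quotient.mk (ssplitIdeal (AdjoinRoot (fpoly n a)) n (bseq n a)) (X i)

lemma relC (ha : a 0 = 1) {k : ℕ} (hk : k ≤ n + 1) :
    algebraMap (AdjoinRoot (fpoly n a)) (SSplit (AdjoinRoot (fpoly n a)) n (bseq n a))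
      (bseq n a (2 * k)) = (-1) ^ k * Esym (fun j => yv n a j ^ 2) k := by
  by_cases hk' : k ≤ n
  · exact ssplit_rel' (bseq n a) (bseq_zero n a ha) hk'
  · have hk2 : k = n + 1 := by omega
    subst hk2
    rw [bseq_top n a ha, map_zero, Esym_of_gt _ (Nat.lt_succ_self n), mul_zero]

/-- The evaluation point for the forward map: the last variable goes to the root,
the others to the variables of `C`. -/
noncomputable def vv : Fin (n + 1) → SSplit (AdjoinRoot (fpoly n a)) n (bseq n a) :=
  Fin.lastCases
    (algebraMap (AdjoinRoot (fpoly n a)) (SSplit (AdjoinRoot (fpoly n a)) n (bseq n a))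
      (AdjoinRoot.root (fpoly n a)))
    (fun j => yv n a j)

lemma vv_last : vv n a (Fin.last n)
    = algebraMap (AdjoinRoot (fpoly n a)) (SSplit (AdjoinRoot (fpoly n a)) n (bseq n a))
      (AdjoinRoot.root (fpoly n a)) := by
  simp [vv]

lemma vv_castSucc (j : Fin n) : vv n a j.castSucc = yv n a j := by
  simp [vv]

lemma relCC (ha : a 0 = 1) {k : ℕ} (hk : k ≤ n) :
    algebraMap A (SSplit (AdjoinRoot (fpoly n a)) n (bseq n a)) (a (2 * (k + 1)))
      = (-1) ^ (k + 1) * Esym (fun j => vv n a j ^ 2) (k + 1) := by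
  have e1 : (fun j : Fin (n + 1) => vv n a j ^ 2) ∘ Fin.castSucc
      = fun j : Fin n => yv n a j ^ 2 := funext fun j => by
    simp only [Function.comp_apply, vv_castSucc]
  have h1 := relC n a ha (show k + 1 ≤ n + 1 by omega)
  have h2 := relC n a ha (show k ≤ n + 1 by omega)
  have h3 : bseq n a (2 * (k + 1)) - AdjoinRoot.root (fpoly n a) ^ 2 * bseq n a (2 * k)
      = algebraMap A (AdjoinRoot (fpoly n a)) (a (2 * (k + 1))) := by
    rw [bseq_succ]
    ring
  rw [Esym_succ, e1, vv_last,
    IsScalarTower.algebraMap_apply A (AdjoinRoot (fpoly n a))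
      (SSplit (AdjoinRoot (fpoly n a)) n (bseq n a)), ← h3, map_sub, map_mul, map_pow, h1, h2,
    pow_succ]
  ring

end Step2

section Step3

variable {A : Type*} [CommRing A] (n : ℕ) (a : ℕ → A)

/-- The forward map `B → C`. -/
noncomputable def Phi (ha : a 0 = 1) :
    SSplit A (n + 1) a →ₐ[A] SSplit (AdjoinRoot (fpoly n a)) n (bseq n a) :=
  Ideal.Quotient.liftₐ _ (MvPolynomial.aeval (vv n a)) (by
    intro p hp
    have hle : ssplitIdeal A (n + 1) a
        ≤ RingHom.ker (MvPolynomial.aeval (vv n a)).toRingHom := by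
      rw [ssplitIdeal, Ideal.span_le]
      rintro _ ⟨i, rfl⟩
      rw [SetLike.mem_coe, RingHom.mem_ker, AlgHom.toRingHom_eq_coe, RingHom.coe_coe,
        map_sub, map_mul, map_pow, map_neg, map_one, MvPolynomial.aeval_C, aeval_esymmSq,
        sub_eq_zero]
      exact relCC n a ha (Nat.lt_succ_iff.1 i.isLt)
    exact RingHom.mem_ker.1 (hle hp))

lemma Phi_mk (ha : a 0 = 1) (p : MvPolynomial (Fin (n + 1)) A) :
    Phi n a ha (Ideal.Quotient.mk (ssplitIdeal A (n + 1) a) p)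
      = MvPolynomial.aeval (vv n a) p := by
  rw [Phi, Ideal.Quotient.liftₐ_apply]
  rfl

/-- The backward map `C → B` (as a ring homomorphism). -/
noncomputable def psi (ha : a 0 = 1) :
    SSplit (AdjoinRoot (fpoly n a)) n (bseq n a) →+* SSplit A (n + 1) a :=
  Ideal.Quotient.lift _
    (MvPolynomial.eval₂Hom ((hhom n a ha) : AdjoinRoot (fpoly n a) →+* SSplit A (n + 1) a)
      (fun i => xv n a i.castSucc)) (by
    intro p hp
    have hle : ssplitIdeal (AdjoinRoot (fpoly n a)) n (bseq n a)
        ≤ RingHom.ker (MvPolynomial.eval₂Hom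
          ((hhom n a ha) : AdjoinRoot (fpoly n a) →+* SSplit A (n + 1) a)
          (fun i => xv n a i.castSucc)) := by
      rw [ssplitIdeal, Ideal.span_le]
      rintro _ ⟨i, rfl⟩
      rw [SetLike.mem_coe, RingHom.mem_ker, map_sub, map_mul, map_pow, map_neg, map_one,
        MvPolynomial.eval₂Hom_C, eval₂Hom_esymmSq, sub_eq_zero]
      exact hhom_bseq n a ha (show i.1 + 1 ≤ n + 1 by omega)
    exact RingHom.mem_ker.1 (hle hp))

lemma psi_mk (ha : a 0 = 1) (q : MvPolynomial (Fin n) (AdjoinRoot (fpoly n a))) :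
    psi n a ha (Ideal.Quotient.mk (ssplitIdeal (AdjoinRoot (fpoly n a)) n (bseq n a)) q)
      = MvPolynomial.eval₂Hom
          ((hhom n a ha) : AdjoinRoot (fpoly n a) →+* SSplit A (n + 1) a)
          (fun i => xv n a i.castSucc) q := by
  rw [psi, Ideal.Quotient.lift_mk]

lemma psi_Phi (ha : a 0 = 1) (z : SSplit A (n + 1) a) : psi n a ha (Phi n a ha z) = z := by
  have hext : (psi n a ha).comp (Phi n a ha).toRingHom
      = RingHom.id (SSplit A (n + 1) a) := by
    apply Ideal.Quotient.ringHom_ext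
    apply MvPolynomial.ringHom_ext
    · intro c
      simp only [RingHom.coe_comp, Function.comp_apply, RingHom.id_apply,
        AlgHom.toRingHom_eq_coe, RingHom.coe_coe]
      rw [show (Ideal.Quotient.mk (ssplitIdeal A (n + 1) a)) (C c)
          = algebraMap A (SSplit A (n + 1) a) c from rfl, AlgHom.commutes]
      rw [IsScalarTower.algebraMap_apply A (AdjoinRoot (fpoly n a))
        (SSplit (AdjoinRoot (fpoly n a)) n (bseq n a)),
        show algebraMap (AdjoinRoot (fpoly n a)) (SSplit (AdjoinRoot (fpoly n a)) n (bseq n a))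
            (algebraMap A (AdjoinRoot (fpoly n a)) c)
          = Ideal.Quotient.mk (ssplitIdeal (AdjoinRoot (fpoly n a)) n (bseq n a))
            (C (algebraMap A (AdjoinRoot (fpoly n a)) c)) from rfl,
        psi_mk, MvPolynomial.eval₂Hom_C, RingHom.coe_coe, AlgHom.commutes]
    · intro i
      simp only [RingHom.coe_comp, Function.comp_apply, RingHom.id_apply,
        AlgHom.toRingHom_eq_coe, RingHom.coe_coe]
      rw [Phi_mk, MvPolynomial.aeval_X]
      induction i using Fin.lastCases with
      | last =>
        rw [vv_last,
          show algebraMap (AdjoinRoot (fpoly n a))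
              (SSplit (AdjoinRoot (fpoly n a)) n (bseq n a)) (AdjoinRoot.root (fpoly n a))
            = Ideal.Quotient.mk (ssplitIdeal (AdjoinRoot (fpoly n a)) n (bseq n a))
              (C (AdjoinRoot.root (fpoly n a))) from rfl,
          psi_mk, MvPolynomial.eval₂Hom_C, RingHom.coe_coe, hhom_root]
        rfl
      | cast j =>
        rw [vv_castSucc, yv, psi_mk, MvPolynomial.eval₂Hom_X']
        rfl
  exact RingHom.congr_fun hext z

lemma Phi_hhom (ha : a 0 = 1) (z : AdjoinRoot (fpoly n a)) :
    Phi n a ha (hhom n a ha z)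
      = algebraMap (AdjoinRoot (fpoly n a)) (SSplit (AdjoinRoot (fpoly n a)) n (bseq n a)) z := by
  have hext : (Phi n a ha).comp (hhom n a ha)
      = IsScalarTower.toAlgHom A (AdjoinRoot (fpoly n a))
          (SSplit (AdjoinRoot (fpoly n a)) n (bseq n a)) := by
    apply AdjoinRoot.algHom_ext
    rw [AlgHom.comp_apply, hhom_root, xv, Phi_mk, MvPolynomial.aeval_X]
    rw [vv_last]
    rfl
  exact AlgHom.congr_fun hext z

lemma Phi_psi (ha : a 0 = 1) (z : SSplit (AdjoinRoot (fpoly n a)) n (bseq n a)) :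
    Phi n a ha (psi n a ha z) = z := by
  have hext : (Phi n a ha).toRingHom.comp (psi n a ha)
      = RingHom.id (SSplit (AdjoinRoot (fpoly n a)) n (bseq n a)) := by
    apply Ideal.Quotient.ringHom_ext
    apply MvPolynomial.ringHom_ext
    · intro c
      simp only [RingHom.coe_comp, Function.comp_apply, RingHom.id_apply,
        AlgHom.toRingHom_eq_coe, RingHom.coe_coe]
      rw [psi_mk, MvPolynomial.eval₂Hom_C, RingHom.coe_coe, Phi_hhom]
      rfl
    · intro i
      simp only [RingHom.coe_comp, Function.comp_apply, RingHom.id_apply,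
        AlgHom.toRingHom_eq_coe, RingHom.coe_coe]
      rw [psi_mk, MvPolynomial.eval₂Hom_X', xv, Phi_mk, MvPolynomial.aeval_X, vv_castSucc]
      rfl
  exact RingHom.congr_fun hext z

/-- The algebra isomorphism `B ≃ C`. -/
noncomputable def PhiEquiv (ha : a 0 = 1) :
    SSplit A (n + 1) a ≃ₐ[A] SSplit (AdjoinRoot (fpoly n a)) n (bseq n a) :=
  AlgEquiv.ofBijective (Phi n a ha)
    ⟨fun u v h => by rw [← psi_Phi n a ha u, h, psi_Phi n a ha v],
     fun c => ⟨psi n a ha c, Phi_psi n a ha c⟩⟩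

end Step3

/-! ### Assembly -/

/-- Over a subsingleton ring every module has a basis of any cardinality. -/
noncomputable def subsingletonBasis {R : Type*} [CommRing R] [Subsingleton R] {M : Type*}
    [AddCommGroup M] [Module R M] (ι : Type*) : Module.Basis ι R M :=
  haveI := Module.subsingleton R M
  Module.Basis.ofRepr
    { toFun := fun _ => 0
      map_add' := by intros; simp
      map_smul' := by intros; simp
      invFun := fun _ => 0
      left_inv := fun x => Subsingleton.elim _ _
      right_inv := fun x => Subsingleton.elim _ _ }

lemma ssplit_base (A : Type*) [CommRing A] (a : ℕ → A) :
    Nonempty (Module.Basis (Fin (2 ^ 0 * Nat.factorial 0)) A (SSplit A 0 a)) := by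
  have hbot : ssplitIdeal A 0 a = ⊥ := by
    rw [ssplitIdeal, Set.range_eq_empty, Ideal.span_empty]
  have hinj : Function.Injective (Ideal.Quotient.mkₐ A (ssplitIdeal A 0 a)) := by
    intro u v h
    have hm : u - v ∈ ssplitIdeal A 0 a := Ideal.Quotient.eq.1 h
    rw [hbot, Ideal.mem_bot, sub_eq_zero] at hm
    exact hm
  let e : MvPolynomial (Fin 0) A ≃ₐ[A] SSplit A 0 a :=
    AlgEquiv.ofBijective (Ideal.Quotient.mkₐ A _)
      ⟨hinj, Ideal.Quotient.mkₐ_surjective A _⟩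
  let e2 := (MvPolynomial.isEmptyAlgEquiv A (Fin 0)).symm.trans e
  exact ⟨((Module.Basis.singleton (Fin 1) A).map e2.toLinearEquiv).reindex
    (finCongr (by norm_num [Nat.factorial]))⟩

set_option synthInstance.maxHeartbeats 1000000 in
lemma ssplit_step {A : Type*} [CommRing A] (n : ℕ) (a : ℕ → A) (ha : a 0 = 1)
    (IH : Nonempty (Module.Basis (Fin (2 ^ n * n.factorial)) (AdjoinRoot (fpoly n a))
        (SSplit (AdjoinRoot (fpoly n a)) n (bseq n a)))) :
    Nonempty (Module.Basis (Fin (2 ^ (n + 1) * (n + 1).factorial)) A (SSplit A (n + 1) a)) := by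
  rcases subsingleton_or_nontrivial A with hA | hA
  · exact ⟨subsingletonBasis _⟩
  obtain ⟨cb⟩ := IH
  let pb := AdjoinRoot.powerBasis' (fpoly_monic n a)
  let b1 : Module.Basis (Fin (2 * (n + 1))) A (AdjoinRoot (fpoly n a)) :=
    pb.basis.reindex (finCongr (by
      show pb.dim = 2 * (n + 1)
      rw [show pb.dim = (fpoly n a).natDegree from rfl, fpoly_natDegree]))
  let b2 : Module.Basis (Fin (2 * (n + 1)) × Fin (2 ^ n * n.factorial)) A
      (SSplit (AdjoinRoot (fpoly n a)) n (bseq n a)) := b1.smulTower cb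
  let b3 := b2.map (PhiEquiv n a ha).symm.toLinearEquiv
  exact ⟨b3.reindex (finProdFinEquiv.trans (finCongr
    (show 2 * (n + 1) * (2 ^ n * n.factorial) = 2 ^ (n + 1) * (n + 1).factorial by
      rw [pow_succ, Nat.factorial_succ]; ring)))⟩

universe u

theorem ssplit_free_aux (n : ℕ) : ∀ (A : Type u) [CommRing A] (a : ℕ → A), a 0 = 1 →
    Nonempty (Module.Basis (Fin (2 ^ n * n.factorial)) A (SSplit A n a)) := by
  induction n with
  | zero =>
    intro A _ a _
    exact ssplit_base A a
  | succ n ih =>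
    intro A _ a ha
    exact ssplit_step n a ha (ih (AdjoinRoot (fpoly n a)) (bseq n a) (bseq_zero n a ha))

/-- The signed splitting ring `B = SSplit_A(f)` is a free `A`-module of rank `2^n · n!`. -/
theorem ssplit_free (A : Type*) [CommRing A] (n : ℕ) (a : ℕ → A) (ha : a 0 = 1) :
    Nonempty (Module.Basis (Fin (2 ^ n * n.factorial)) A (SSplit A n a)) :=
  ssplit_free_aux n A a ha
end

section
/- Let V be an n-dimensional complex vector space, f : V → V* skew-symmetric, g : V* → V symmetric with rank g ≤ 2r where 2r ≤ n. Then the characteristic polynomial of g∘f : V → V is divisible by u^{n−2r} and the quotient is an even polynomial (a polynomial in u²). -/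
open Polynomial

section Helpers

open Matrix

private lemma aux_coeff_comp_neg_X {R : Type*} [CommRing R] (p : R[X]) (k : ℕ) :
    (p.comp (-X)).coeff k = (-1)^k * p.coeff k := by
  induction p using Polynomial.induction_on' with
  | add p q hp hq => simp [add_comp, hp, hq, mul_add]
  | monomial n a =>
    rw [monomial_comp, neg_pow, show ((-1:R[X])^n) = C ((-1:R)^n) by simp,
      ← mul_assoc, mul_comm (C a), mul_assoc, coeff_C_mul, coeff_C_mul, coeff_monomial,
      coeff_X_pow]
    split
    · rename_i h; subst h; simp [mul_comm]
    · rename_i h; rw [if_neg (fun hh => h hh.symm)]; ring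

private lemma aux_charmatrix_transpose {R : Type*} [CommRing R] {n : Type*} [DecidableEq n]
    [Fintype n] (M : Matrix n n R) : charmatrix Mᵀ = (charmatrix M)ᵀ := by
  ext i j
  rcases eq_or_ne i j with rfl | h
  · simp
  · simp [charmatrix_apply_ne _ _ _ h, charmatrix_apply_ne _ _ _ h.symm]

private lemma aux_charpoly_transpose {R : Type*} [CommRing R] {n : Type*} [DecidableEq n]
    [Fintype n] (M : Matrix n n R) : Mᵀ.charpoly = M.charpoly := by
  rw [Matrix.charpoly, aux_charmatrix_transpose, Matrix.det_transpose, Matrix.charpoly]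

private lemma aux_charpoly_mul_comm {R : Type*} [CommRing R] [IsDomain R] {ι : Type*}
    [DecidableEq ι] [Fintype ι] (A B : Matrix ι ι R) :
    (A * B).charpoly = (B * A).charpoly := by
  classical
  set A' := A.map (C : R →+* R[X]) with hA'
  set B' := B.map (C : R →+* R[X]) with hB'
  set s : Matrix ι ι R[X] := Matrix.scalar ι (X : R[X]) with hs
  have hcomm : s * B' = B' * s := by
    rw [hs]
    exact (Matrix.scalar_commute (X : R[X]) (fun r => Commute.all _ _) B').symm ▸ rfl
  have hsc : ∀ (M N : Matrix ι ι R), charmatrix (M*N) =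
      s - (M.map (C : R →+* R[X])) * (N.map (C : R →+* R[X])) := by
    intro M N
    rw [charmatrix, ← Matrix.map_mul]
    rfl
  have h1 : (fromBlocks (charmatrix (A*B)) A' 0 s) * (fromBlocks 1 0 B' 1) =
      fromBlocks s A' (s * B') s := by
    rw [Matrix.fromBlocks_multiply]
    simp only [Matrix.mul_one, Matrix.one_mul, Matrix.zero_mul, Matrix.mul_zero, add_zero,
      zero_add]
    rw [hsc A B, sub_add_cancel]
  have h2 : (fromBlocks 1 0 B' 1) * (fromBlocks s A' 0 (charmatrix (B*A))) =
      fromBlocks s A' (s * B') s := by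
    rw [Matrix.fromBlocks_multiply]
    simp only [Matrix.mul_one, Matrix.one_mul, Matrix.zero_mul, Matrix.mul_zero, add_zero,
      zero_add]
    rw [hsc B A, hcomm, add_sub_cancel]
  have hdet := congrArg Matrix.det (h1.trans h2.symm)
  rw [Matrix.det_mul, Matrix.det_mul, Matrix.det_fromBlocks_zero₂₁, Matrix.det_fromBlocks_zero₂₁,
    Matrix.det_fromBlocks_zero₁₂, Matrix.det_one, one_mul, mul_one] at hdet
  have hXn : s.det ≠ 0 := by
    rw [hs]
    simp only [Matrix.scalar_apply, Matrix.det_diagonal, Finset.prod_const]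
    exact pow_ne_zero _ X_ne_zero
  rw [Matrix.charpoly, Matrix.charpoly]
  rw [mul_comm, one_mul] at hdet
  exact mul_left_cancel₀ hXn hdet

private lemma aux_charpoly_comp_neg {R : Type*} [CommRing R] {ι : Type*} [DecidableEq ι]
    [Fintype ι] (M : Matrix ι ι R) :
    M.charpoly.comp (-X) = (-1)^(Fintype.card ι) * (-M).charpoly := by
  classical
  rw [Matrix.charpoly, comp_eq_aeval, AlgHom.map_det]
  have hmat : (charmatrix M).map (aeval (-X : R[X]) : R[X] → R[X]) = -(charmatrix (-M)) := by
    ext i j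
    rcases eq_or_ne i j with rfl | h
    · simp [charmatrix_apply_eq]; ring
    · simp [charmatrix_apply_ne _ _ _ h]
  rw [show ((aeval (-X : R[X]) : R[X] →ₐ[R] R[X]).mapMatrix (charmatrix M)) =
    (charmatrix M).map (aeval (-X : R[X]) : R[X] → R[X]) from rfl, hmat, Matrix.det_neg,
    Matrix.charpoly]

private lemma aux_even_poly {R : Type*} [CommRing R] (s : R[X])
    (h : ∀ k, Odd k → s.coeff k = 0) : ∃ q : R[X], s = q.comp (X^2) := by
  classical
  refine ⟨∑ i ∈ Finset.range (s.natDegree + 1), C (s.coeff (2*i)) * X^i, ?_⟩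
  rw [Polynomial.sum_comp]
  ext m
  rw [finset_sum_coeff]
  simp only [mul_comp, C_comp, X_comp, pow_comp, ← pow_mul, coeff_C_mul, coeff_X_pow]
  rcases Nat.even_or_odd m with ⟨t, ht⟩ | hm
  · have hm2 : m = 2 * t := by omega
    subst hm2
    have hcongr : ∀ i ∈ Finset.range (s.natDegree + 1),
        (s.coeff (2*i) * if 2*t = 2*i then (1:R) else 0) =
        (if t = i then s.coeff (2*i) else 0) := by
      intro i _
      by_cases hti : t = i
      · subst hti; simp
      · rw [if_neg (by omega), if_neg hti]; ring
    rw [Finset.sum_congr rfl hcongr,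
      Finset.sum_ite_eq (Finset.range (s.natDegree + 1)) t (fun i => s.coeff (2*i))]
    split
    · rfl
    · rename_i hnot
      rw [Finset.mem_range] at hnot
      exact coeff_eq_zero_of_natDegree_lt (show s.natDegree < 2*t by omega)
  · rw [h m hm]
    symm
    apply Finset.sum_eq_zero
    intro i _
    obtain ⟨k, hk⟩ := hm
    rw [if_neg (by omega)]
    ring

end Helpers

open Matrix

/-- Let `V` be an `n`-dimensional complex vector space, `f : V → V*` skew-symmetric, and
`g : V* → V` symmetric of rank `≤ 2r` with `2r ≤ n`.  Then the characteristic polynomial of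
`g ∘ f : V → V` is divisible by `u^{n-2r}`, and the quotient is an even polynomial
(a polynomial in `u²`). -/
theorem charpoly_gf_divisible (V : Type*) [AddCommGroup V] [Module ℂ V]
    [FiniteDimensional ℂ V] (n r : ℕ) (hdim : Module.finrank ℂ V = n)
    (hr : 2 * r ≤ n)
    (f : V →ₗ[ℂ] Module.Dual ℂ V) (hf : ∀ v w : V, f v w = -(f w v))
    (g : Module.Dual ℂ V →ₗ[ℂ] V) (hg : ∀ φ ψ : Module.Dual ℂ V, φ (g ψ) = ψ (g φ))
    (hrkg : Module.finrank ℂ (LinearMap.range g) ≤ 2 * r) :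
    ∃ q : Polynomial ℂ,
      LinearMap.charpoly (g ∘ₗ f) = X ^ (n - 2 * r) * q.comp (X ^ 2) := by
  classical
  set T : Module.End ℂ V := g ∘ₗ f with hT
  set p : Polynomial ℂ := LinearMap.charpoly T with hp
  -- Step A : n - 2r ≤ natTrailingDegree p
  have hker_le : LinearMap.ker T ≤ Module.End.maxGenEigenspace T 0 := by
    intro x hx
    rw [Module.End.mem_maxGenEigenspace]
    exact ⟨1, by simpa using hx⟩
  have hA : n - 2*r ≤ p.natTrailingDegree := by
    have h1 := LinearMap.finrank_maxGenEigenspace_zero_eq T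
    rw [← hp] at h1
    have h2 : Module.finrank ℂ (LinearMap.ker T) ≤
        Module.finrank ℂ (Module.End.maxGenEigenspace T 0) := Submodule.finrank_mono hker_le
    rw [h1] at h2
    have h3 := LinearMap.finrank_range_add_finrank_ker T
    have h4 : Module.finrank ℂ (LinearMap.range T) ≤ 2*r :=
      le_trans (Submodule.finrank_mono (LinearMap.range_comp_le_range f g)) hrkg
    rw [hdim] at h3
    omega
  -- Step B : parity of the charpoly via matrices
  have hB : p = (-1)^n * p.comp (-X) := by
    have b0 := Module.finBasis ℂ V
    let b : Module.Basis (Fin n) ℂ V := b0.reindex (finCongr hdim)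
    set F : Matrix (Fin n) (Fin n) ℂ := LinearMap.toMatrix b b.dualBasis f with hF
    set G : Matrix (Fin n) (Fin n) ℂ := LinearMap.toMatrix b.dualBasis b g with hG
    have hpGF : p = (G * F).charpoly := by
      rw [hp, ← LinearMap.charpoly_toMatrix T b, hT, LinearMap.toMatrix_comp b b.dualBasis b g f]
    have hFt : Fᵀ = -F := by
      ext i j
      simp only [Matrix.transpose_apply, Matrix.neg_apply, hF, LinearMap.toMatrix_apply,
        Module.Basis.dualBasis_repr]
      exact hf (b i) (b j)
    have hGt : Gᵀ = G := by
      ext i j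
      simp only [Matrix.transpose_apply, hG, LinearMap.toMatrix_apply]
      rw [← Module.Basis.dualBasis_apply, ← Module.Basis.dualBasis_apply]
      exact hg _ _
    have hcard : Fintype.card (Fin n) = n := Fintype.card_fin n
    have hneg := aux_charpoly_comp_neg (F * G)
    rw [hcard] at hneg
    calc p = (G*F).charpoly := hpGF
      _ = ((G*F)ᵀ).charpoly := (aux_charpoly_transpose _).symm
      _ = (-(F*G)).charpoly := by rw [Matrix.transpose_mul, hFt, hGt, Matrix.neg_mul]
      _ = (-1)^n * ((F*G).charpoly).comp (-X) := by
          rw [hneg, ← mul_assoc, ← pow_add, Even.neg_one_pow ⟨n, by ring⟩, one_mul]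
      _ = (-1)^n * ((G*F).charpoly).comp (-X) := by rw [aux_charpoly_mul_comm]
      _ = (-1)^n * p.comp (-X) := by rw [hpGF]
  -- Step C : assemble
  have hdvd : X^(n - 2*r) ∣ p := by
    rw [X_pow_dvd_iff]
    intro d hd
    exact coeff_eq_zero_of_lt_natTrailingDegree (lt_of_lt_of_le hd hA)
  obtain ⟨s, hs⟩ := hdvd
  have hcoeffp : ∀ m : ℕ, ¬ Even (n + m) → p.coeff m = 0 := by
    intro m hm
    have hodd : Odd (n + m) := Nat.not_even_iff_odd.mp hm
    have heq : p.coeff m = -p.coeff m := by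
      conv_lhs => rw [hB]
      rw [show ((-1:Polynomial ℂ)^n) = C ((-1:ℂ)^n) by simp, coeff_C_mul,
        aux_coeff_comp_neg_X, ← mul_assoc, ← pow_add, hodd.neg_one_pow, neg_one_mul]
    exact add_self_eq_zero.mp (by nth_rewrite 1 [heq]; exact neg_add_cancel _)
  have hsodd : ∀ k, Odd k → s.coeff k = 0 := by
    intro k hk'
    have h1 : p.coeff (k + (n - 2*r)) = s.coeff k := by rw [hs, coeff_X_pow_mul]
    have h2 : ¬ Even (n + (k + (n - 2*r))) := by
      obtain ⟨j, hj⟩ := hk'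
      rintro ⟨m, hm⟩
      omega
    rw [← h1, hcoeffp _ h2]
  obtain ⟨q, hq⟩ := aux_even_poly s hsodd
  exact ⟨q, by rw [hs, hq]⟩
end

section
/- Let E = ℂ^{2r} with nondegenerate symmetric bilinear form given by J = [[0, I_r],[I_r, 0]], let D be a symmetric 2r × 2r complex matrix written in r × r blocks as D = [[D₁, D₂],[D₂ᵀ, 0]]. Set ψ = [[½D₁, I_r],[D₂ᵀ, 0]]. Then D = ψ J ψᵀ and det(ψ) = ± det(D₂). -/
open Matrix

/-- Let `E = ℂ^{2r}` with the split symmetric bilinear form `J = [[0, I],[I, 0]]`, and let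
`D = [[D₁, D₂],[D₂ᵀ, 0]]` be a symmetric `2r × 2r` matrix (so `D₁ᵀ = D₁`).  Set
`ψ = [[½D₁, I],[D₂ᵀ, 0]]`.  Then `D = ψ J ψᵀ` and `det ψ = ± det D₂`. -/
theorem symmetric_factors_through_split_form (r : ℕ) (D₁ D₂ : Matrix (Fin r) (Fin r) ℂ)
    (hD₁ : D₁ᵀ = D₁) :
    fromBlocks D₁ D₂ D₂ᵀ 0 =
      fromBlocks ((2 : ℂ)⁻¹ • D₁) 1 D₂ᵀ 0 * fromBlocks 0 1 1 0 *
        (fromBlocks ((2 : ℂ)⁻¹ • D₁) 1 D₂ᵀ 0)ᵀ ∧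
    ((fromBlocks ((2 : ℂ)⁻¹ • D₁) 1 D₂ᵀ (0 : Matrix (Fin r) (Fin r) ℂ)).det = D₂.det ∨
     (fromBlocks ((2 : ℂ)⁻¹ • D₁) 1 D₂ᵀ (0 : Matrix (Fin r) (Fin r) ℂ)).det = -D₂.det) := by
  constructor
  · rw [fromBlocks_transpose, fromBlocks_multiply, fromBlocks_multiply]
    simp [transpose_smul, hD₁, Matrix.smul_mul, Matrix.mul_smul]
    rw [← two_smul ℂ, smul_smul]
    norm_num
  · have key : fromBlocks ((2 : ℂ)⁻¹ • D₁) 1 D₂ᵀ (0 : Matrix (Fin r) (Fin r) ℂ) =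
        fromBlocks 1 ((2 : ℂ)⁻¹ • D₁) 0 D₂ᵀ * fromBlocks (0 : Matrix (Fin r) (Fin r) ℂ) 1 1 (0 : Matrix (Fin r) (Fin r) ℂ) := by
      rw [fromBlocks_multiply]; simp
    have hJ : (fromBlocks (0 : Matrix (Fin r) (Fin r) ℂ) 1 1 (0 : Matrix (Fin r) (Fin r) ℂ)).det = 1 ∨
        (fromBlocks (0 : Matrix (Fin r) (Fin r) ℂ) 1 1 (0 : Matrix (Fin r) (Fin r) ℂ)).det = -1 := by
      have h2 : (fromBlocks (0 : Matrix (Fin r) (Fin r) ℂ) 1 1 (0 : Matrix (Fin r) (Fin r) ℂ)).det ^ 2 = 1 := by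
        rw [sq, ← det_mul, fromBlocks_multiply]
        simp [← fromBlocks_one]
      exact sq_eq_one_iff.mp h2
    rw [key, det_mul, det_fromBlocks_zero₂₁, det_one, one_mul, det_transpose]
    rcases hJ with h | h
    · left; rw [h, mul_one]
    · right; rw [h, mul_neg_one]
end

section
/- Fix integers a ≥ 1. The map (b, α) ↦ P(a, b, α) = (b+α₁,…,b+α_b, b,…,b (a times), α₁ᵀ,…,α_{α₁}ᵀ), defined on pairs of a nonnegative integer b and a partition α with at most b parts, is injective into the set of partitions. -/
/-- The conjugate (transpose) of a partition given as a list: the `j`-th column length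
`αᵀ_j = #{i : α_i ≥ j}` for `j = 1, …, α₁`. -/
def conjList (α : List ℕ) : List ℕ :=
  (List.range (α.foldr max 0)).map fun j => (α.filter fun x => j < x).length

/-- The partition `P(a, b, α) = (b+α₁, …, b+α_b, b, …, b (a times), αᵀ₁, …, αᵀ_{α₁})`, as a list
(where `α` is padded with zeros to have exactly `b` parts). -/
def Ppart (a b : ℕ) (α : List ℕ) : List ℕ :=
  ((List.range b).map fun i => b + α.getD i 0) ++ List.replicate a b ++ conjList α

/-- A list of natural numbers represents a partition when it is weakly decreasing with positive
entries. -/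
def IsPartitionList (α : List ℕ) : Prop :=
  α.Pairwise (· ≥ ·) ∧ ∀ x ∈ α, 0 < x

lemma conjList_mem_le {α : List ℕ} {x : ℕ} (hx : x ∈ conjList α) : x ≤ α.length := by
  simp only [conjList, List.mem_map, List.mem_range] at hx
  obtain ⟨j, -, rfl⟩ := hx
  exact List.length_filter_le _ _

/-- Count of entries ≥ t in the filtered multiset equals the count in the list, for t ≥ 1. -/
lemma countP_filter_eq (t : ℕ) (ht : 1 ≤ t) (l : List ℕ) :
    Multiset.countP (fun x => t ≤ x)
        (Multiset.filter (fun x => 0 < x) (↑l : Multiset ℕ)) =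
      List.countP (fun x => decide (t ≤ x)) l := by
  rw [Multiset.countP_filter]
  rw [show (Multiset.countP (fun a => t ≤ a ∧ 0 < a) ↑l) =
      Multiset.countP (fun a => t ≤ a) (↑l : Multiset ℕ) from
    Multiset.countP_congr rfl (fun x _ => by
      simp only [eq_iff_iff]
      exact ⟨fun h => h.1, fun h => ⟨h, lt_of_lt_of_le ht h⟩⟩)]
  rw [Multiset.coe_countP]

lemma countP_Ppart_ge (a b : ℕ) (α : List ℕ) :
    b + a ≤ List.countP (fun x => decide (b ≤ x)) (Ppart a b α) := by
  unfold Ppart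
  rw [List.countP_append, List.countP_append]
  have h1 : List.countP (fun x => decide (b ≤ x))
      ((List.range b).map fun i => b + α.getD i 0) = b := by
    rw [show List.countP (fun x => decide (b ≤ x))
        ((List.range b).map fun i => b + α.getD i 0)
        = (((List.range b).map fun i => b + α.getD i 0)).length from
      List.countP_eq_length.mpr (by
        intro x hx
        simp only [List.mem_map, List.mem_range] at hx
        obtain ⟨i, -, rfl⟩ := hx
        simp)]
    simp
  have h2 : List.countP (fun x => decide (b ≤ x)) (List.replicate a b) = a := by
    rw [List.countP_replicate]; simp
  omega

lemma countP_Ppart_gt (a b : ℕ) (α : List ℕ) (hl : α.length ≤ b) :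
    List.countP (fun x => decide (b + 1 ≤ x)) (Ppart a b α) ≤ b := by
  unfold Ppart
  rw [List.countP_append, List.countP_append]
  have h1 : List.countP (fun x => decide (b + 1 ≤ x))
      ((List.range b).map fun i => b + α.getD i 0) ≤ b :=
    le_trans List.countP_le_length (le_of_eq (by simp))
  have h2 : List.countP (fun x => decide (b + 1 ≤ x)) (List.replicate a b) = 0 := by
    rw [List.countP_replicate]; simp
  have h3 : List.countP (fun x => decide (b + 1 ≤ x)) (conjList α) = 0 := by
    rw [List.countP_eq_zero]
    intro x hx
    have := conjList_mem_le hx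
    simp only [decide_eq_true_eq]
    omega
  omega

/-- If the two filtered multisets agree and both `b`s are positive, then `b₁ ≤ b₂`. -/
lemma b_le_b (a : ℕ) (b₁ b₂ : ℕ) (α₁ α₂ : List ℕ)
    (hb₁ : 1 ≤ b₁) (hl₂ : α₂.length ≤ b₂)
    (heq : Multiset.filter (fun x => 0 < x) (↑(Ppart a b₁ α₁) : Multiset ℕ) =
           Multiset.filter (fun x => 0 < x) (↑(Ppart a b₂ α₂) : Multiset ℕ)) :
    b₁ ≤ b₂ := by
  by_contra h
  push_neg at h
  -- b₂ + 1 ≤ b₁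
  have key : Multiset.countP (fun x => b₁ ≤ x)
      (Multiset.filter (fun x => 0 < x) (↑(Ppart a b₁ α₁) : Multiset ℕ)) =
      Multiset.countP (fun x => b₁ ≤ x)
      (Multiset.filter (fun x => 0 < x) (↑(Ppart a b₂ α₂) : Multiset ℕ)) := by rw [heq]
  rw [countP_filter_eq b₁ hb₁, countP_filter_eq b₁ hb₁] at key
  have hge := countP_Ppart_ge a b₁ α₁
  have hle : List.countP (fun x => decide (b₁ ≤ x)) (Ppart a b₂ α₂)
      ≤ List.countP (fun x => decide (b₂ + 1 ≤ x)) (Ppart a b₂ α₂) := by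
    apply List.countP_mono_left
    intro x _ hx
    simp only [decide_eq_true_eq] at hx ⊢
    omega
  have := countP_Ppart_gt a b₂ α₂ hl₂
  omega

lemma filter_Ppart (a b : ℕ) (α : List ℕ) (hα : ∀ x ∈ α, 0 < x) (hl : α.length ≤ b) :
    List.filter (fun x => decide (b < x)) (Ppart a b α) = α.map (fun x => b + x) := by
  unfold Ppart
  rw [List.filter_append, List.filter_append]
  have h2 : List.filter (fun x => decide (b < x)) (List.replicate a b) = [] := by
    rw [List.filter_replicate]; simp
  have h3 : List.filter (fun x => decide (b < x)) (conjList α) = [] := by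
    rw [List.filter_eq_nil_iff]
    intro x hx
    have := conjList_mem_le hx
    simp only [decide_eq_true_eq]
    omega
  have h1 : List.filter (fun x => decide (b < x))
      ((List.range b).map fun i => b + α.getD i 0) = α.map (fun x => b + x) := by
    rw [List.filter_map]
    obtain ⟨k, rfl⟩ : ∃ k, b = α.length + k := ⟨b - α.length, by omega⟩
    rw [List.range_add, List.filter_append]
    have e1 : List.filter ((fun x => decide (α.length + k < x)) ∘
        fun i => α.length + k + α.getD i 0) (List.range α.length) = List.range α.length := by
      rw [List.filter_eq_self]
      intro i hi
      simp only [List.mem_range] at hi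
      have : 0 < α.getD i 0 := by
        rw [List.getD_eq_getElem α 0 hi]
        exact hα _ (List.getElem_mem hi)
      simp only [Function.comp_apply, decide_eq_true_eq]
      omega
    have e2 : List.filter ((fun x => decide (α.length + k < x)) ∘
        fun i => α.length + k + α.getD i 0)
        ((List.range k).map fun x => α.length + x) = [] := by
      rw [List.filter_eq_nil_iff]
      intro i hi
      simp only [List.mem_map, List.mem_range] at hi
      obtain ⟨j, -, rfl⟩ := hi
      have : α.getD (α.length + j) 0 = 0 := List.getD_eq_default α 0 (by omega)
      simp only [Function.comp_apply, decide_eq_true_eq, this]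
      omega
    rw [e1, e2, List.append_nil]
    apply List.ext_getElem
    · simp
    · intro n hn1 hn2
      simp only [List.getElem_map, List.getElem_range]
      rw [List.getD_eq_getElem α 0 (by simpa using hn2)]
  rw [h1, h2, h3, List.append_nil, List.append_nil]

/-- For fixed `a ≥ 1`, the map `(b, α) ↦ P(a, b, α)`, defined on pairs of a nonnegative integer
`b` and a partition `α` with at most `b` parts, is injective into the set of partitions
(partitions being compared as multisets of positive parts). -/
theorem Ppart_injective (a : ℕ) (ha : 1 ≤ a)
    (b₁ b₂ : ℕ) (α₁ α₂ : List ℕ)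
    (h₁ : IsPartitionList α₁) (hl₁ : α₁.length ≤ b₁)
    (h₂ : IsPartitionList α₂) (hl₂ : α₂.length ≤ b₂)
    (heq : Multiset.filter (fun x => 0 < x) (↑(Ppart a b₁ α₁) : Multiset ℕ) =
           Multiset.filter (fun x => 0 < x) (↑(Ppart a b₂ α₂) : Multiset ℕ)) :
    b₁ = b₂ ∧ α₁ = α₂ := by
  -- first handle the case where one of the b's is zero
  have hmem : ∀ (b : ℕ) (α : List ℕ), 1 ≤ b →
      (b : ℕ) ∈ Multiset.filter (fun x => 0 < x) (↑(Ppart a b α) : Multiset ℕ) := by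
    intro b α hb
    rw [Multiset.mem_filter]
    refine ⟨?_, hb⟩
    rw [Multiset.mem_coe]
    unfold Ppart
    simp only [List.mem_append]
    left; right
    exact List.mem_replicate.mpr ⟨by omega, rfl⟩
  have hzero : Multiset.filter (fun x => 0 < x) (↑(Ppart a 0 ([] : List ℕ)) : Multiset ℕ)
      = 0 := by
    rw [Multiset.filter_eq_nil]
    intro x hx
    rw [Multiset.mem_coe] at hx
    unfold Ppart conjList at hx
    simp only [List.range_zero, List.map_nil, List.nil_append, List.foldr_nil,
      List.append_nil, List.mem_replicate] at hx
    omega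
  rcases Nat.eq_zero_or_pos b₁ with hb₁ | hb₁
  · subst hb₁
    have hα₁ : α₁ = [] := List.eq_nil_of_length_eq_zero (Nat.le_zero.mp hl₁)
    subst hα₁
    rcases Nat.eq_zero_or_pos b₂ with hb₂ | hb₂
    · subst hb₂
      have hα₂ : α₂ = [] := List.eq_nil_of_length_eq_zero (Nat.le_zero.mp hl₂)
      exact ⟨rfl, hα₂.symm⟩
    · exfalso
      have := hmem b₂ α₂ hb₂
      rw [← heq, hzero] at this
      exact Multiset.notMem_zero _ this
  rcases Nat.eq_zero_or_pos b₂ with hb₂ | hb₂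
  · exfalso
    subst hb₂
    have hα₂ : α₂ = [] := List.eq_nil_of_length_eq_zero (Nat.le_zero.mp hl₂)
    subst hα₂
    have := hmem b₁ α₁ hb₁
    rw [heq, hzero] at this
    exact Multiset.notMem_zero _ this
  -- both b's are positive; they coincide
  have hb : b₁ = b₂ :=
    le_antisymm (b_le_b a b₁ b₂ α₁ α₂ hb₁ hl₂ heq) (b_le_b a b₂ b₁ α₂ α₁ hb₂ hl₁ heq.symm)
  subst hb
  refine ⟨rfl, ?_⟩
  -- now recover α from the parts > b₁
  have hf : Multiset.filter (fun x => b₁ < x)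
      (Multiset.filter (fun x => 0 < x) (↑(Ppart a b₁ α₁) : Multiset ℕ)) =
      Multiset.filter (fun x => b₁ < x)
      (Multiset.filter (fun x => 0 < x) (↑(Ppart a b₁ α₂) : Multiset ℕ)) := by rw [heq]
  rw [Multiset.filter_filter, Multiset.filter_filter] at hf
  have hcong : ∀ (l : List ℕ), Multiset.filter (fun x => b₁ < x ∧ 0 < x) (↑l : Multiset ℕ)
      = Multiset.filter (fun x => b₁ < x) (↑l : Multiset ℕ) :=
    fun l => Multiset.filter_congr (fun x _ => ⟨fun h => h.1, fun h => ⟨h, by omega⟩⟩)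
  rw [hcong, hcong, Multiset.filter_coe, Multiset.filter_coe,
    filter_Ppart a b₁ α₁ h₁.2 hl₁, filter_Ppart a b₁ α₂ h₂.2 hl₂,
    ← Multiset.map_coe, ← Multiset.map_coe] at hf
  have hperm : α₁.Perm α₂ := Multiset.coe_eq_coe.mp
    (Multiset.map_injective (add_right_injective b₁) hf)
  exact List.Perm.eq_of_pairwise' h₁.1 h₂.1 hperm
end
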